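/- For n ≥ 2, the distinguishing number of the directed graph C₃[Iₙ] — the wreath product with vertex set Fin 3 × Fin n and edges (i,a) → (j,b) iff j = i + 1 (mod 3) — equals n + 1: there is a distinguishing coloring with n+1 colors and none with n colors. -/

import Mathlib

/-- The wreath product `C₃[Iₙ]`: vertex set `Fin 3 × Fin n`, with an edge
`(i,a) → (j,b)` iff `j = i + 1 (mod 3)`. -/
def C3In_Adj (n : ℕ) (x y : Fin 3 × Fin n) : Prop := y.1 = x.1 + 1

/-- For `n ≥ 2`, the distinguishing number of `C₃[Iₙ]` is `n + 1`:
there is a distinguishing coloring with `n+1` colors and none with `n` colors. -/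
theorem C3_wreath_In_distinguishing_number
    (n : ℕ) (hn : 2 ≤ n) :
    (∃ c : Fin 3 × Fin n → Fin (n + 1),
      ∀ g : (Fin 3 × Fin n) ≃ (Fin 3 × Fin n),
        (∀ x y, C3In_Adj n x y ↔ C3In_Adj n (g x) (g y)) →
        (∀ v, c (g v) = c v) → ∀ v, g v = v) ∧
    (∀ c : Fin 3 × Fin n → Fin n,
      ∃ g : (Fin 3 × Fin n) ≃ (Fin 3 × Fin n),
        (∀ x y, C3In_Adj n x y ↔ C3In_Adj n (g x) (g y)) ∧
        (∃ v, g v ≠ v) ∧ ∀ v, c (g v) = c v) := by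
  have h0 : 0 < n := by omega
  set z : Fin n := ⟨0, h0⟩ with hz
  constructor
  · refine ⟨fun p => if p.1 = 0 then p.2.castSucc else p.2.succ, ?_⟩
    intro g hadj hcol
    have s : ∀ (i : Fin 3) (a b : Fin n),
        (g (i + 1, b)).1 = (g (i, a)).1 + 1 := fun i a b =>
      (hadj (i, a) (i + 1, b)).mp rfl
    have e0 : ∀ a : Fin n, (g (0, a)).1 = (g (0, z)).1 := by
      intro a
      exact add_right_cancel ((s 0 a z).symm.trans (s 0 z z))
    have e1 : ∀ a : Fin n, (g (1, a)).1 = (g (0, z)).1 + 1 := by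
      intro a
      have h := s 0 z a
      rwa [show (0 : Fin 3) + 1 = 1 from rfl] at h
    have e2 : ∀ a : Fin n, (g (2, a)).1 = (g (0, z)).1 + 1 + 1 := by
      intro a
      have h := s 1 z a
      rw [show (1 : Fin 3) + 1 = 2 from rfl] at h
      rw [h, e1 z]
    have key : ∀ x : Fin 3 × Fin n, (g x).1 = x.1 + (g (0, z)).1 := by
      have e2' : ∀ a : Fin n, (g (2, a)).1 = 2 + (g (0, z)).1 := by
        intro a; rw [e2 a]; generalize (g (0, z)).1 = y; revert y; decide
      have e1' : ∀ a : Fin n, (g (1, a)).1 = 1 + (g (0, z)).1 := by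
        intro a; rw [e1 a]; generalize (g (0, z)).1 = y; revert y; decide
      rintro ⟨i, a⟩
      fin_cases i
      · simpa using e0 a
      · simpa using e1' a
      · simpa using e2' a
    -- the rotation part is trivial
    have hk : (g (0, z)).1 = 0 := by
      have hc := hcol (0, z)
      by_contra hne
      have h1 : (g (0, z)) = ((g (0, z)).1, (g (0, z)).2) := rfl
      rw [h1] at hc
      simp only [hne, if_neg, if_pos rfl] at hc
      have : ((g (0, z)).2).succ = z.castSucc := by simpa [hne] using hc
      have hzero : z.castSucc = (0 : Fin (n+1)) := rfl
      rw [hzero] at this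
      exact Fin.succ_ne_zero _ this
    have hfst : ∀ x : Fin 3 × Fin n, (g x).1 = x.1 := by
      intro x; rw [key x, hk, add_zero]
    intro v
    have hc := hcol v
    rw [show (g v) = ((g v).1, (g v).2) from rfl, hfst v] at hc
    have h2 : (g v).2 = v.2 := by
      by_cases hv : v.1 = 0
      · simp only [hv, if_pos rfl] at hc
        exact Fin.castSucc_injective n hc
      · simp only [hv, if_neg, ite_false] at hc
        exact Fin.succ_injective n hc
    exact Prod.ext (hfst v) h2
  · intro c
    by_cases h : ∀ i : Fin 3, Function.Injective (fun a : Fin n => c (i, a))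
    · have hb : ∀ i : Fin 3, Function.Bijective (fun a : Fin n => c (i, a)) :=
        fun i => Finite.injective_iff_bijective.mp (h i)
      set e : Fin 3 → (Fin n ≃ Fin n) := fun i => Equiv.ofBijective _ (hb i) with he
      refine ⟨⟨fun x => (x.1 + 1, (e (x.1 + 1)).symm (e x.1 x.2)),
               fun x => (x.1 - 1, (e (x.1 - 1)).symm (e x.1 x.2)), ?_, ?_⟩, ?_, ?_, ?_⟩
      · rintro ⟨i, a⟩
        simp [add_sub_cancel_right]
      · rintro ⟨i, a⟩
        simp [sub_add_cancel]
      · intro x y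
        exact (add_left_inj 1).symm
      · refine ⟨(0, z), fun hcontra => ?_⟩
        have : (0 : Fin 3) + 1 = 0 := congrArg Prod.fst hcontra
        simp at this
      · rintro ⟨i, a⟩
        show c (i + 1, (e (i + 1)).symm (e i a)) = c (i, a)
        have h1 : c (i + 1, (e (i + 1)).symm (e i a))
            = e (i + 1) ((e (i + 1)).symm (e i a)) := rfl
        rw [h1, Equiv.apply_symm_apply]
        rfl
    · push_neg at h
      obtain ⟨i, hi⟩ := h
      obtain ⟨a, b, hcab, hab⟩ := Function.not_injective_iff.mp hi
      have hfst : ∀ x : Fin 3 × Fin n, (Equiv.swap (i, a) (i, b) x).1 = x.1 := by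
        intro x
        rcases eq_or_ne x (i, a) with rfl | hxa
        · rw [Equiv.swap_apply_left]
        · rcases eq_or_ne x (i, b) with rfl | hxb
          · rw [Equiv.swap_apply_right]
          · rw [Equiv.swap_apply_of_ne_of_ne hxa hxb]
      refine ⟨Equiv.swap (i, a) (i, b), ?_, ⟨(i, a), ?_⟩, ?_⟩
      · intro x y
        unfold C3In_Adj
        rw [hfst x, hfst y]
      · rw [Equiv.swap_apply_left]
        intro hcon
        exact hab (congrArg Prod.snd hcon).symm
      · intro v
        rcases eq_or_ne v (i, a) with rfl | hxa
        · rw [Equiv.swap_apply_left]; exact hcab.symm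
        · rcases eq_or_ne v (i, b) with rfl | hxb
          · rw [Equiv.swap_apply_right]; exact hcab
          · rw [Equiv.swap_apply_of_ne_of_ne hxa hxb]
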